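/- arXiv:1210.3229 — 3 statements merged into one kernel-verified Lean document; each statement's English description precedes it below -/
import Mathlib

section
/- For every integer m ≥ 1, the map (t₀, …, t_m) ↦ ∫_{Σ_{j=0}^{m−1} t_j}^{Δ} g(s) · ∏_{k=0}^{m} F(t_k, s − Σ_{j=0}^{k−1} t_j) ds is continuous on the domain D_m = {(t₀, …, t_m) : t_j > 0 for all j, Σ_{j=0}^{m−1} t_j < Δ, and t_m < τ}. -/
open Real Set Filter MeasureTheory Topology

/-- Conditional ISI density `F t s` given time-to-live `s` of the feedback impulse. -/
noncomputable def F (lam τ t s : ℝ) : ℝ :=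
  if 0 < t ∧ t < s then lam ^ 2 * t * Real.exp (-lam * t)
  else if s ≤ t ∧ t ≤ s + τ then
    (1 + lam * s) * Real.exp (-lam * s) * (lam ^ 2 * (t - s) * Real.exp (-lam * (t - s)))
  else 0

/-- Regular part of the stationary time-to-live density. -/
noncomputable def g (lam A B s : ℝ) : ℝ := A + B * Real.exp (2 * lam * s)

/-- Weight of the singular (Dirac) part of the stationary time-to-live distribution. -/
noncomputable def aC (lam Δ : ℝ) : ℝ :=
  4 * Real.exp (2 * lam * Δ) / ((3 + 2 * lam * Δ) * Real.exp (2 * lam * Δ) + 1)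

/-- `T t p q = Σ_{j=p}^{q-1} t_j` (empty sums are `0`). -/
def T {n : ℕ} (t : Fin n → ℝ) (p q : ℕ) : ℝ :=
  ∑ j : Fin n, if p ≤ (j : ℕ) ∧ (j : ℕ) < q then t j else 0

/-- `Ilow lam Δ τ A B i t` is the term `I_i`, `0 ≤ i ≤ m-1`, of the joint ISI density. -/
noncomputable def Ilow (lam Δ τ A B : ℝ) {m : ℕ} (i : ℕ) (t : Fin (m + 1) → ℝ) : ℝ :=
  (∏ k : Fin (m + 1), if i + 1 ≤ (k : ℕ) then F lam τ (t k) (Δ - T t (i + 1) (k : ℕ)) else 1) *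
    ∫ s in T t 0 i..T t 0 (i + 1),
      g lam A B s *
        ∏ k : Fin (m + 1), if (k : ℕ) ≤ i then F lam τ (t k) (s - T t 0 (k : ℕ)) else 1

/-- `Itop lam Δ τ A B t` is the term `I_m` of the joint ISI density. -/
noncomputable def Itop (lam Δ τ A B : ℝ) {m : ℕ} (t : Fin (m + 1) → ℝ) : ℝ :=
  (∫ s in T t 0 m..Δ, g lam A B s * ∏ k : Fin (m + 1), F lam τ (t k) (s - T t 0 (k : ℕ)))
    + aC lam Δ * ∏ k : Fin (m + 1), F lam τ (t k) (Δ - T t 0 (k : ℕ))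

/-- `J lam Δ τ A B t = Σ_{i=0}^{m} I_i(t)`, the joint density of `m+1` consecutive ISIs. -/
noncomputable def J (lam Δ τ A B : ℝ) {m : ℕ} (t : Fin (m + 1) → ℝ) : ℝ :=
  (∑ i ∈ Finset.range m, Ilow lam Δ τ A B i t) + Itop lam Δ τ A B t

/- ### Auxiliary lemmas -/

lemma T_continuous {n : ℕ} (p q : ℕ) : Continuous fun t : Fin n → ℝ => T t p q := by
  unfold T
  refine continuous_finset_sum _ fun j _ => ?_
  by_cases h : p ≤ (j : ℕ) ∧ (j : ℕ) < q
  · simpa [h] using continuous_apply j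
  · simpa [h] using (continuous_const : Continuous fun _ : Fin n → ℝ => (0 : ℝ))

lemma F_measurable (lam τ a : ℝ) : Measurable (fun b => F lam τ a b) := by
  unfold F
  have hs1 : MeasurableSet {b : ℝ | 0 < a ∧ a < b} := by
    by_cases h : 0 < a
    · have : {b : ℝ | 0 < a ∧ a < b} = Ioi a := by ext b; simp [h]
      rw [this]; exact measurableSet_Ioi
    · have : {b : ℝ | 0 < a ∧ a < b} = ∅ := by ext b; simp [h]
      rw [this]; exact MeasurableSet.empty
  have hs2 : MeasurableSet {b : ℝ | b ≤ a ∧ a ≤ b + τ} := by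
    have : {b : ℝ | b ≤ a ∧ a ≤ b + τ} = Icc (a - τ) a := by
      ext b; simp only [mem_setOf_eq, mem_Icc]
      constructor <;> rintro ⟨h1, h2⟩ <;> constructor <;> linarith
    rw [this]; exact measurableSet_Icc
  exact Measurable.ite hs1 measurable_const <| Measurable.ite hs2
    (by fun_prop) measurable_const

/-- Explicit continuous bound for `F`. -/
noncomputable def Fb (lam a b : ℝ) : ℝ :=
  lam ^ 2 * |a| * Real.exp (lam * |a|) +
    (1 + lam * |b|) * Real.exp (lam * |b|) *
      (lam ^ 2 * (|a| + |b|) * Real.exp (lam * (|a| + |b|)))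

lemma Fb_continuous (lam : ℝ) : Continuous fun p : ℝ × ℝ => Fb lam p.1 p.2 := by
  unfold Fb
  continuity

lemma Fb_nonneg {lam : ℝ} (hlam : 0 ≤ lam) (a b : ℝ) : 0 ≤ Fb lam a b := by
  unfold Fb; positivity

lemma F_le_Fb (lam τ : ℝ) (hlam : 0 ≤ lam) (a b : ℝ) : |F lam τ a b| ≤ Fb lam a b := by
  have h2nn : 0 ≤ (1 + lam * |b|) * Real.exp (lam * |b|) *
      (lam ^ 2 * (|a| + |b|) * Real.exp (lam * (|a| + |b|))) := by positivity
  have h1nn : 0 ≤ lam ^ 2 * |a| * Real.exp (lam * |a|) := by positivity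
  unfold F Fb
  split_ifs with h1 h2
  · have ha : 0 < a := h1.1
    rw [abs_of_nonneg (by positivity)]
    have : lam ^ 2 * a * Real.exp (-lam * a) ≤ lam ^ 2 * |a| * Real.exp (lam * |a|) := by
      gcongr
      all_goals first
        | exact le_abs_self a
        | nlinarith [le_abs_self a, neg_abs_le a]
    linarith
  · have hab : 0 ≤ a - b := sub_nonneg.2 h2.1
    have key : |(1 + lam * b) * Real.exp (-lam * b) *
        (lam ^ 2 * (a - b) * Real.exp (-lam * (a - b)))| ≤
        (1 + lam * |b|) * Real.exp (lam * |b|) *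
          (lam ^ 2 * (|a| + |b|) * Real.exp (lam * (|a| + |b|))) := by
      simp only [abs_mul, Real.abs_exp]
      rw [abs_of_nonneg (sq_nonneg lam), abs_of_nonneg hab]
      have hb0 : |1 + lam * b| ≤ 1 + lam * |b| :=
        (abs_add_le 1 (lam * b)).trans (by simp [abs_mul, abs_of_nonneg hlam])
      have hb1 : -lam * b ≤ lam * |b| := by nlinarith [neg_abs_le b]
      have hb3 : a - b ≤ |a| + |b| := (le_abs_self _).trans (abs_sub a b)
      have hb2 : -lam * (a - b) ≤ lam * (|a| + |b|) := by
        nlinarith [neg_abs_le (a - b), abs_sub a b]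
      gcongr <;> first | positivity | exact hb0 | linarith
    linarith
  · simpa using by positivity

lemma F_continuousAt (lam τ : ℝ) (hτ : 0 < τ) {a b : ℝ} (ha : 0 < a) (h1 : a ≠ b)
    (h2 : a ≠ b + τ) : ContinuousAt (fun p : ℝ × ℝ => F lam τ p.1 p.2) (a, b) := by
  rcases lt_or_gt_of_ne h1 with hab | hab
  · -- 0 < a < b : first branch
    have hopen : IsOpen {p : ℝ × ℝ | 0 < p.1 ∧ p.1 < p.2} :=
      (isOpen_lt continuous_const continuous_fst).inter (isOpen_lt continuous_fst continuous_snd)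
    have heq : (fun p : ℝ × ℝ => lam ^ 2 * p.1 * Real.exp (-lam * p.1)) =ᶠ[𝓝 (a, b)]
        fun p : ℝ × ℝ => F lam τ p.1 p.2 := by
      filter_upwards [hopen.mem_nhds ⟨ha, hab⟩] with p hp
      simp only [F, if_pos (show 0 < p.1 ∧ p.1 < p.2 from hp)]
    exact ContinuousAt.congr (by fun_prop) heq
  · rcases lt_or_gt_of_ne h2 with hab2 | hab2
    · -- b < a < b + τ : second branch
      have hopen : IsOpen {p : ℝ × ℝ | p.2 < p.1 ∧ p.1 < p.2 + τ} :=
        (isOpen_lt continuous_snd continuous_fst).inter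
          (isOpen_lt continuous_fst (continuous_snd.add continuous_const))
      have heq : (fun p : ℝ × ℝ => (1 + lam * p.2) * Real.exp (-lam * p.2) *
          (lam ^ 2 * (p.1 - p.2) * Real.exp (-lam * (p.1 - p.2)))) =ᶠ[𝓝 (a, b)]
          fun p : ℝ × ℝ => F lam τ p.1 p.2 := by
        filter_upwards [hopen.mem_nhds ⟨hab, hab2⟩] with p hp
        have hne : ¬(0 < p.1 ∧ p.1 < p.2) := fun h => absurd hp.1 (not_lt.2 h.2.le)
        simp only [F, if_neg hne, if_pos (show p.2 ≤ p.1 ∧ p.1 ≤ p.2 + τ from ⟨hp.1.le, hp.2.le⟩)]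
      exact ContinuousAt.congr (by fun_prop) heq
    · -- a > b + τ : zero
      have hopen : IsOpen {p : ℝ × ℝ | p.2 + τ < p.1} :=
        isOpen_lt (continuous_snd.add continuous_const) continuous_fst
      have heq : (fun _ : ℝ × ℝ => (0 : ℝ)) =ᶠ[𝓝 (a, b)]
          fun p : ℝ × ℝ => F lam τ p.1 p.2 := by
        filter_upwards [hopen.mem_nhds hab2] with p hp
        have hp' : p.2 + τ < p.1 := hp
        have h1' : ¬(0 < p.1 ∧ p.1 < p.2) := fun h => by linarith [h.2]
        have h2' : ¬(p.2 ≤ p.1 ∧ p.1 ≤ p.2 + τ) := fun h => by linarith [h.2]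
        simp only [F, if_neg h1', if_neg h2']
      exact ContinuousAt.congr continuousAt_const heq

/-- for every `m ≥ 1`, the map
`(t₀,…,t_m) ↦ ∫_{Σ_{j<m} t_j}^{Δ} g(s) ∏_{k=0}^{m} F(t_k, s − Σ_{j<k} t_j) ds`
is continuous on `D_m = {t_j > 0 ∀ j, Σ_{j=0}^{m−1} t_j < Δ, t_m < τ}`. -/
theorem stmt6 (lam Δ τ A B : ℝ) (hlam : 0 < lam) (hΔ : 0 < Δ) (hΔτ : Δ < τ)
    (m : ℕ) (hm : 1 ≤ m) :
    ContinuousOn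
      (fun t : Fin (m + 1) → ℝ =>
        ∫ s in T t 0 m..Δ,
          g lam A B s * ∏ k : Fin (m + 1), F lam τ (t k) (s - T t 0 (k : ℕ)))
      {t : Fin (m + 1) → ℝ | (∀ j, 0 < t j) ∧ T t 0 m < Δ ∧ t (Fin.last m) < τ} := by
  have hτ : 0 < τ := hΔ.trans hΔτ
  intro t₀ ht₀
  obtain ⟨hpos, -, -⟩ := ht₀
  apply ContinuousAt.continuousWithinAt
  set f : (Fin (m + 1) → ℝ) → ℝ → ℝ := fun t s =>
    g lam A B s * ∏ k : Fin (m + 1), F lam τ (t k) (s - T t 0 (k : ℕ)) with hfdef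
  set c : (Fin (m + 1) → ℝ) → ℝ := fun t => T t 0 m with hcdef
  have hc_cont : Continuous c := T_continuous 0 m
  have hgcont : Continuous (g lam A B) := by unfold g; fun_prop
  have hfmeas : ∀ t, Measurable (f t) := fun t =>
    hgcont.measurable.mul <| Finset.measurable_prod _ fun k _ =>
      (F_measurable lam τ (t k)).comp (measurable_id.sub measurable_const)
  set S : Set ℝ := Icc (min (c t₀) Δ - 1) (max (c t₀) Δ + 1) with hSdef
  -- uniform bound on closedBall t₀ 1 × S
  have hGcont : Continuous fun p : (Fin (m + 1) → ℝ) × ℝ =>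
      |g lam A B p.2| * ∏ k : Fin (m + 1), Fb lam (p.1 k) (p.2 - T p.1 0 (k : ℕ)) := by
    refine Continuous.mul (continuous_abs.comp (hgcont.comp continuous_snd)) ?_
    refine continuous_finset_prod _ fun k _ => ?_
    have h1 : Continuous fun p : (Fin (m + 1) → ℝ) × ℝ =>
        (p.1 k, p.2 - T p.1 0 (k : ℕ)) :=
      ((continuous_apply k).comp continuous_fst).prodMk
        (continuous_snd.sub ((T_continuous 0 k).comp continuous_fst))
    exact (Fb_continuous lam).comp h1
  obtain ⟨C, hC⟩ := ((isCompact_closedBall t₀ 1).prod isCompact_Icc).exists_bound_of_continuousOn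
    hGcont.continuousOn
  have hbound : ∀ t ∈ Metric.closedBall t₀ 1, ∀ s ∈ S, ‖f t s‖ ≤ C := by
    intro t ht s hs
    have h2 : |∏ k : Fin (m + 1), F lam τ (t k) (s - T t 0 (k : ℕ))| ≤
        ∏ k : Fin (m + 1), Fb lam (t k) (s - T t 0 (k : ℕ)) := by
      rw [Finset.abs_prod]
      exact Finset.prod_le_prod (fun k _ => abs_nonneg _) fun k _ => F_le_Fb lam τ hlam.le _ _
    have hGnn : 0 ≤ |g lam A B s| * ∏ k : Fin (m + 1), Fb lam (t k) (s - T t 0 (k : ℕ)) :=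
      mul_nonneg (abs_nonneg _) (Finset.prod_nonneg fun k _ => Fb_nonneg hlam.le _ _)
    calc ‖f t s‖ = |g lam A B s| * |∏ k : Fin (m + 1), F lam τ (t k) (s - T t 0 (k : ℕ))| := by
          rw [Real.norm_eq_abs, abs_mul]
      _ ≤ |g lam A B s| * ∏ k : Fin (m + 1), Fb lam (t k) (s - T t 0 (k : ℕ)) :=
          mul_le_mul_of_nonneg_left h2 (abs_nonneg _)
      _ ≤ C := by
          have := hC (t, s) ⟨ht, hs⟩
          rwa [Real.norm_eq_abs, abs_of_nonneg hGnn] at this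
  -- subsets of S
  have hsub : ∀ u v : ℝ, min (c t₀) Δ - 1 ≤ min u v → max u v ≤ max (c t₀) Δ + 1 →
      uIoc u v ⊆ S := by
    intro u v h1 h2
    refine uIoc_subset_uIcc.trans ?_
    rw [uIcc]
    exact Icc_subset_Icc h1 h2
  have hsub1 : uIoc (c t₀) Δ ⊆ S :=
    hsub _ _ (by linarith [min_le_min (le_refl (c t₀)) (le_refl Δ)]) (by linarith)
  -- integrability
  have hInt : ∀ t, ∀ u v : ℝ, Metric.closedBall t₀ 1 t → uIoc u v ⊆ S →
      IntervalIntegrable (f t) volume u v := by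
    intro t u v ht hsub'
    rw [intervalIntegrable_iff]
    refine Integrable.mono' (g := fun _ => C) (integrableOn_const (ne_of_lt ?_))
      (hfmeas t).aestronglyMeasurable ?_
    · rw [uIoc]; exact measure_Ioc_lt_top
    · exact ae_restrict_of_forall_mem measurableSet_uIoc fun s hs => hbound t ht s (hsub' hs)
  -- part A : continuity of the integral with frozen lower bound
  have hA : ContinuousAt (fun t => ∫ s in (c t₀)..Δ, f t s) t₀ := by
    apply intervalIntegral.continuousAt_of_dominated_interval (bound := fun _ => C)
    · exact Eventually.of_forall fun t => (hfmeas t).aestronglyMeasurable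
    · filter_upwards [Metric.closedBall_mem_nhds t₀ one_pos] with t ht
      exact Eventually.of_forall fun s hs => hbound t ht s (hsub1 hs)
    · exact intervalIntegrable_const
    · -- a.e. continuity in t
      have hEfin : (⋃ k : Fin (m + 1),
          ({t₀ k + T t₀ 0 (k : ℕ), t₀ k + T t₀ 0 (k : ℕ) - τ} : Set ℝ)).Finite :=
        Set.finite_iUnion fun k => (Set.finite_singleton _).insert _
      have hE0 : volume (⋃ k : Fin (m + 1),
          ({t₀ k + T t₀ 0 (k : ℕ), t₀ k + T t₀ 0 (k : ℕ) - τ} : Set ℝ)) = 0 :=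
        hEfin.measure_zero _
      filter_upwards [measure_eq_zero_iff_ae_notMem.mp hE0] with s hs _
      refine ContinuousAt.mul continuousAt_const ?_
      refine tendsto_finset_prod _ fun k _ => ?_
      have hk1 : t₀ k ≠ s - T t₀ 0 (k : ℕ) := by
        intro h
        exact hs (mem_iUnion.2 ⟨k, by left; linarith [h]⟩)
      have hk2 : t₀ k ≠ s - T t₀ 0 (k : ℕ) + τ := by
        intro h
        exact hs (mem_iUnion.2 ⟨k, by right; simp only [mem_singleton_iff]; linarith [h]⟩)
      have hinner : ContinuousAt (fun t : Fin (m + 1) → ℝ => (t k, s - T t 0 (k : ℕ))) t₀ :=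
        ((continuous_apply k).prodMk
          ((continuous_const : Continuous fun _ : Fin (m + 1) → ℝ => s).sub
            (T_continuous 0 (k : ℕ)))).continuousAt
      have hcomp := ContinuousAt.comp (x := t₀)
        (f := fun t : Fin (m + 1) → ℝ => (t k, s - T t 0 (k : ℕ)))
        (g := fun p : ℝ × ℝ => F lam τ p.1 p.2)
        (F_continuousAt lam τ hτ (hpos k) hk1 hk2) hinner
      exact hcomp
  -- part B : the moving piece tends to 0
  have hnear : ∀ᶠ t in 𝓝 t₀, t ∈ Metric.closedBall t₀ 1 ∧ c t ∈ Icc (c t₀ - 1) (c t₀ + 1) := by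
    filter_upwards [Metric.closedBall_mem_nhds t₀ one_pos,
      hc_cont.continuousAt.preimage_mem_nhds
        (Icc_mem_nhds (show c t₀ - 1 < c t₀ by linarith) (show c t₀ < c t₀ + 1 by linarith))]
      with t h1 h2
    exact ⟨h1, h2⟩
  have hsub2 : ∀ t, c t ∈ Icc (c t₀ - 1) (c t₀ + 1) → uIoc (c t) (c t₀) ⊆ S := by
    intro t ht
    refine hsub _ _ ?_ ?_
    · have := ht.1
      have h1 : min (c t₀) Δ ≤ c t₀ := min_le_left _ _
      rcases min_cases (c t) (c t₀) with ⟨h, -⟩ | ⟨h, -⟩ <;> rw [h] <;> linarith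
    · have := ht.2
      have h1 : c t₀ ≤ max (c t₀) Δ := le_max_left _ _
      rcases max_cases (c t) (c t₀) with ⟨h, -⟩ | ⟨h, -⟩ <;> rw [h] <;> linarith
  have hB : Tendsto (fun t => ∫ s in (c t)..(c t₀), f t s) (𝓝 t₀) (𝓝 0) := by
    apply squeeze_zero_norm'
      (a := fun t => max C 0 * |c t₀ - c t|)
    · filter_upwards [hnear] with t ht
      refine intervalIntegral.norm_integral_le_of_norm_le_const fun s hs => ?_
      exact (hbound t ht.1 s (hsub2 t ht.2 hs)).trans (le_max_left _ _)
    · have : Continuous fun t : Fin (m + 1) → ℝ => max C 0 * |c t₀ - c t| := by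
        exact continuous_const.mul (continuous_abs.comp (continuous_const.sub hc_cont))
      have h0 := this.tendsto t₀
      simpa using h0
  -- assembly
  have heq : ∀ᶠ t in 𝓝 t₀, (∫ s in (c t)..(c t₀), f t s) + (∫ s in (c t₀)..Δ, f t s) =
      ∫ s in (c t)..Δ, f t s := by
    filter_upwards [hnear] with t ht
    exact intervalIntegral.integral_add_adjacent_intervals
      (hInt t _ _ ht.1 (hsub2 t ht.2)) (hInt t _ _ ht.1 hsub1)
  have hsum : Tendsto (fun t => (∫ s in (c t)..(c t₀), f t s) + (∫ s in (c t₀)..Δ, f t s))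
      (𝓝 t₀) (𝓝 (0 + ∫ s in (c t₀)..Δ, f t₀ s)) := hB.add hA
  rw [zero_add] at hsum
  have hmain : Tendsto (fun t => ∫ s in (c t)..Δ, f t s) (𝓝 t₀)
      (𝓝 (∫ s in (c t₀)..Δ, f t₀ s)) := hsum.congr' heq
  exact hmain
end

section
/- For every integer m ≥ 1 and every i ∈ {0, …, m−1}, the function I_i is continuous at every point of the domain D_m = {(t₀, …, t_m) : t_j > 0 for all j, Σ_{j=0}^{m−1} t_j < Δ, t_m < τ} at which Σ_{j=i+1}^{m} t_j ≠ Δ. -/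
open Real Set Filter MeasureTheory
open Topology

-- helper lemmas

lemma T_split {n : ℕ} (u : Fin n → ℝ) {p q r : ℕ} (h1 : p ≤ q) (h2 : q ≤ r) :
    T u p r = T u p q + T u q r := by
  unfold T
  rw [← Finset.sum_add_distrib]
  refine Finset.sum_congr rfl fun j _ => ?_
  split_ifs <;> first | (exfalso; omega) | ring

lemma T_nonneg {n : ℕ} {u : Fin n → ℝ} (hu : ∀ j, 0 ≤ u j) (p q : ℕ) : 0 ≤ T u p q :=
  Finset.sum_nonneg fun j _ => by split_ifs; exacts [hu j, le_refl 0]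

lemma T_single {n : ℕ} (u : Fin n → ℝ) {k : ℕ} (hk : k < n) :
    T u k (k + 1) = u ⟨k, hk⟩ := by
  unfold T
  have h : ∀ j : Fin n, (if k ≤ (j : ℕ) ∧ (j : ℕ) < k + 1 then u j else 0)
      = (if j = ⟨k, hk⟩ then u j else 0) := by
    intro j
    by_cases h : j = ⟨k, hk⟩
    · subst h; simp
    · have hc : ¬(k ≤ (j : ℕ) ∧ (j : ℕ) < k + 1) := by
        intro hc
        have hjk : (j : ℕ) = k := by omega
        exact h (Fin.ext (by simp [hjk]))
      rw [if_neg hc, if_neg h]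
  rw [Finset.sum_congr rfl fun j _ => h j, Finset.sum_ite_eq' Finset.univ ⟨k, hk⟩ u]
  simp

lemma T_cont {n : ℕ} (p q : ℕ) : Continuous fun u : Fin n → ℝ => T u p q := by
  unfold T
  refine continuous_finset_sum _ fun j _ => ?_
  by_cases h : p ≤ (j : ℕ) ∧ (j : ℕ) < q
  · simpa [h] using continuous_apply j
  · simp only [h, if_false]
    exact continuous_const

lemma F_eq_one {lam τ t s : ℝ} (h1 : 0 < t) (h2 : t < s) :
    F lam τ t s = lam ^ 2 * t * Real.exp (-lam * t) := by
  simp [F, h1, h2]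

lemma F_eq_two {lam τ t s : ℝ} (h1 : s ≤ t) (h2 : t ≤ s + τ) :
    F lam τ t s =
      (1 + lam * s) * Real.exp (-lam * s) * (lam ^ 2 * (t - s) * Real.exp (-lam * (t - s))) := by
  have : ¬(0 < t ∧ t < s) := fun hc => absurd hc.2 (not_lt.mpr h1)
  simp [F, this, h1, h2]

lemma F_cont1 (lam τ : ℝ) {p : ℝ × ℝ} (h1 : 0 < p.1) (h2 : p.1 < p.2) :
    ContinuousAt (fun q : ℝ × ℝ => F lam τ q.1 q.2) p := by
  have ho : IsOpen {q : ℝ × ℝ | 0 < q.1 ∧ q.1 < q.2} :=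
    (isOpen_lt continuous_const continuous_fst).inter (isOpen_lt continuous_fst continuous_snd)
  have hev : (fun q : ℝ × ℝ => lam ^ 2 * q.1 * Real.exp (-lam * q.1))
      =ᶠ[𝓝 p] (fun q : ℝ × ℝ => F lam τ q.1 q.2) := by
    filter_upwards [ho.mem_nhds ⟨h1, h2⟩] with q hq
    exact (F_eq_one hq.1 hq.2).symm
  refine ContinuousAt.congr ?_ hev
  fun_prop

lemma F_cont2 (lam τ : ℝ) {p : ℝ × ℝ} (h1 : p.2 < p.1) (h2 : p.1 < p.2 + τ) :
    ContinuousAt (fun q : ℝ × ℝ => F lam τ q.1 q.2) p := by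
  have ho : IsOpen {q : ℝ × ℝ | q.2 < q.1 ∧ q.1 < q.2 + τ} :=
    (isOpen_lt continuous_snd continuous_fst).inter
      (isOpen_lt continuous_fst (continuous_snd.add continuous_const))
  have hev : (fun q : ℝ × ℝ => (1 + lam * q.2) * Real.exp (-lam * q.2) *
        (lam ^ 2 * (q.1 - q.2) * Real.exp (-lam * (q.1 - q.2))))
      =ᶠ[𝓝 p] (fun q : ℝ × ℝ => F lam τ q.1 q.2) := by
    filter_upwards [ho.mem_nhds ⟨h1, h2⟩] with q hq
    exact (F_eq_two hq.1.le hq.2.le).symm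
  refine ContinuousAt.congr ?_ hev
  fun_prop


noncomputable def Phi (lam A B : ℝ) (i : ℕ) {m : ℕ} (u : Fin (m + 1) → ℝ) (s : ℝ) : ℝ :=
  g lam A B s * ∏ k : Fin (m + 1),
    (if (k : ℕ) < i then lam ^ 2 * u k * Real.exp (-lam * u k)
     else if (k : ℕ) = i then
       (1 + lam * (s - T u 0 i)) * Real.exp (-lam * (s - T u 0 i)) *
         (lam ^ 2 * (u k - (s - T u 0 i)) * Real.exp (-lam * (u k - (s - T u 0 i))))
     else 1)

lemma Phi_cont (lam A B : ℝ) (i m : ℕ) :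
    Continuous (Function.uncurry (Phi lam A B i (m := m))) := by
  unfold Function.uncurry Phi
  refine Continuous.mul ?_ ?_
  · have : Continuous fun p : (Fin (m + 1) → ℝ) × ℝ => g lam A B p.2 := by
      unfold g; fun_prop
    exact this
  · refine continuous_finset_prod _ fun k _ => ?_
    have huk : Continuous fun p : (Fin (m + 1) → ℝ) × ℝ => p.1 k :=
      (continuous_apply k).comp continuous_fst
    have hs' : Continuous fun p : (Fin (m + 1) → ℝ) × ℝ => p.2 - T p.1 0 i :=
      continuous_snd.sub ((T_cont 0 i).comp continuous_fst)
    by_cases h1 : (k : ℕ) < i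
    · simp only [if_pos h1]
      have hb1 : Continuous fun x : ℝ => lam ^ 2 * x * Real.exp (-lam * x) := by fun_prop
      exact hb1.comp huk
    · by_cases h2 : (k : ℕ) = i
      · simp only [if_neg h1, if_pos h2]
        have hb2 : Continuous fun q : ℝ × ℝ => (1 + lam * q.2) * Real.exp (-lam * q.2) *
            (lam ^ 2 * (q.1 - q.2) * Real.exp (-lam * (q.1 - q.2))) := by fun_prop
        exact hb2.comp (huk.prodMk hs')
      · simp only [if_neg h1, if_neg h2]
        exact continuous_const


/-- for `m ≥ 1` and `0 ≤ i ≤ m−1`, the term `I_i` is continuous at every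
point of `D_m = {t_j > 0 ∀ j, Σ_{j=0}^{m−1} t_j < Δ, t_m < τ}` at which
`Σ_{j=i+1}^{m} t_j ≠ Δ`. -/
theorem stmt8 (lam Δ τ A B : ℝ) (hlam : 0 < lam) (hΔ : 0 < Δ) (hΔτ : Δ < τ)
    (m : ℕ) (hm : 1 ≤ m) (i : ℕ) (hi : i < m) (t : Fin (m + 1) → ℝ)
    (ht : (∀ j, 0 < t j) ∧ T t 0 m < Δ ∧ t (Fin.last m) < τ)
    (hne : T t (i + 1) (m + 1) ≠ Δ) :
    ContinuousWithinAt (Ilow lam Δ τ A B i)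
      {u : Fin (m + 1) → ℝ | (∀ j, 0 < u j) ∧ T u 0 m < Δ ∧ u (Fin.last m) < τ} t := by
  obtain ⟨ht1, ht2, ht3⟩ := ht
  refine ContinuousAt.continuousWithinAt ?_
  have hii : i < m + 1 := Nat.lt_succ_of_lt hi
  -- continuity of the product over k ≥ i+1
  have hP : ContinuousAt (fun u : Fin (m + 1) → ℝ =>
      ∏ k : Fin (m + 1),
        if i + 1 ≤ (k : ℕ) then F lam τ (u k) (Δ - T u (i + 1) (k : ℕ)) else 1) t := by
    refine tendsto_finset_prod _ fun k _ => ?_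
    by_cases hk : i + 1 ≤ (k : ℕ)
    · simp only [if_pos hk]
      have hcomp : Continuous
          (fun u : Fin (m + 1) → ℝ => ((u k, Δ - T u (i + 1) (k : ℕ)) : ℝ × ℝ)) :=
        (continuous_apply k).prodMk (continuous_const.sub (T_cont _ _))
      have key : ContinuousAt (fun q : ℝ × ℝ => F lam τ q.1 q.2)
          (t k, Δ - T t (i + 1) (k : ℕ)) := by
        have hkm : (k : ℕ) ≤ m := Nat.lt_succ_iff.mp k.isLt
        rcases lt_or_eq_of_le hkm with hkm' | hkm'
        · -- k < m : first branch region
          have e0 : T t 0 m = T t 0 (i + 1) + T t (i + 1) m :=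
            T_split t (Nat.zero_le _) hi
          have e1 : T t (i + 1) m = T t (i + 1) ((k : ℕ) + 1) + T t ((k : ℕ) + 1) m :=
            T_split t (hk.trans (Nat.le_succ _)) hkm'
          have e2 : T t (i + 1) ((k : ℕ) + 1) = T t (i + 1) (k : ℕ) + t k := by
            rw [T_split t hk (Nat.le_succ _), T_single t k.isLt]
          have hn1 := T_nonneg (fun j => (ht1 j).le) 0 (i + 1)
          have hn2 := T_nonneg (fun j => (ht1 j).le) ((k : ℕ) + 1) m
          refine F_cont1 lam τ (ht1 k) ?_
          show t k < Δ - T t (i + 1) (k : ℕ)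
          linarith
        · -- k = m : use the hypothesis hne
          have e0 : T t 0 m = T t 0 (i + 1) + T t (i + 1) m :=
            T_split t (Nat.zero_le _) hi
          have e1 : T t (i + 1) (m + 1) = T t (i + 1) m + t k := by
            rw [T_split t hi (Nat.le_succ _), T_single t (Nat.lt_succ_self m)]
            congr 1
            exact congrArg t (Fin.ext hkm'.symm)
          have hn1 := T_nonneg (fun j => (ht1 j).le) 0 (i + 1)
          have hs0 : 0 < Δ - T t (i + 1) m := by linarith
          have hklast : k = Fin.last m := Fin.ext hkm'
          have htk : t k ≠ Δ - T t (i + 1) m := by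
            intro hc
            exact hne (by linarith)
          rw [hkm']
          rcases lt_or_gt_of_ne htk with hlt | hgt
          · exact F_cont1 lam τ (ht1 k) hlt
          · refine F_cont2 lam τ hgt ?_
            have h5 : t k < τ := by rw [hklast]; exact ht3
            show t k < (Δ - T t (i + 1) m) + τ
            linarith
      exact ContinuousAt.comp
        (f := fun u : Fin (m + 1) → ℝ => ((u k, Δ - T u (i + 1) (k : ℕ)) : ℝ × ℝ))
        key hcomp.continuousAt
    · simp only [if_neg hk]
      exact tendsto_const_nhds
  -- the integral part
  have hΦc : Continuous (Function.uncurry (Phi lam A B i (m := m))) := Phi_cont lam A B i m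
  -- rewriting the integral on the open set
  have hrw : ∀ u : Fin (m + 1) → ℝ, (∀ j, 0 < u j) → T u 0 m < Δ →
      (∫ s in T u 0 i..T u 0 (i + 1),
        g lam A B s *
          ∏ k : Fin (m + 1), if (k : ℕ) ≤ i then F lam τ (u k) (s - T u 0 (k : ℕ)) else 1)
      = (∫ s in (0 : ℝ)..T u 0 (i + 1), Phi lam A B i u s) - ∫ s in (0 : ℝ)..T u 0 i, Phi lam A B i u s := by
    intro u hu1 hu2
    have hab : T u 0 (i + 1) = T u 0 i + u ⟨i, hii⟩ := by
      rw [T_split u (Nat.zero_le i) (Nat.le_succ i), T_single u hii]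
    have hui : 0 < u ⟨i, hii⟩ := hu1 _
    have huiτ : u ⟨i, hii⟩ < τ := by
      have h1 : T u 0 m = T u 0 (i + 1) + T u (i + 1) m := T_split u (Nat.zero_le _) hi
      have hn1 := T_nonneg (fun j => (hu1 j).le) 0 i
      have hn2 := T_nonneg (fun j => (hu1 j).le) (i + 1) m
      linarith
    have hcongr : (∫ s in T u 0 i..T u 0 (i + 1),
        g lam A B s *
          ∏ k : Fin (m + 1), if (k : ℕ) ≤ i then F lam τ (u k) (s - T u 0 (k : ℕ)) else 1)
        = ∫ s in T u 0 i..T u 0 (i + 1), Phi lam A B i u s := by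
      apply intervalIntegral.integral_congr_ae
      refine Eventually.of_forall fun s hmem => ?_
      rw [uIoc_of_le (by linarith : T u 0 i ≤ T u 0 (i + 1))] at hmem
      obtain ⟨hs1, hs2⟩ := hmem
      unfold Phi
      congr 1
      refine Finset.prod_congr rfl fun k _ => ?_
      rcases lt_trichotomy ((k : ℕ)) i with hk | hk | hk
      · rw [if_pos hk.le, if_pos hk]
        have e1 : T u 0 i = T u 0 (k : ℕ) + T u (k : ℕ) i :=
          T_split u (Nat.zero_le _) hk.le
        have e2 : T u (k : ℕ) i = u k + T u ((k : ℕ) + 1) i := by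
          rw [T_split u (Nat.le_succ _) hk, T_single u k.isLt]
        have hn3 := T_nonneg (fun j => (hu1 j).le) ((k : ℕ) + 1) i
        exact F_eq_one (hu1 k) (by linarith)
      · rw [if_pos hk.le, if_neg (by omega : ¬ (k : ℕ) < i), if_pos hk]
        have hTk : T u 0 (k : ℕ) = T u 0 i := by rw [hk]
        have huki : u k = u ⟨i, hii⟩ := congrArg u (Fin.ext (by simp [hk]))
        rw [hTk]
        refine F_eq_two ?_ ?_
        · rw [huki]; linarith
        · rw [huki]; linarith
      · rw [if_neg (by omega : ¬ (k : ℕ) ≤ i), if_neg (by omega : ¬ (k : ℕ) < i),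
          if_neg (by omega : ¬ (k : ℕ) = i)]
    rw [hcongr]
    have hΦu : Continuous fun s => Phi lam A B i u s := by
      have h := hΦc.comp (Continuous.prodMk_right u)
      exact h
    rw [intervalIntegral.integral_interval_sub_left
      (hΦu.intervalIntegrable 0 (T u 0 (i + 1))) (hΦu.intervalIntegrable 0 (T u 0 i))]
  -- the open neighbourhood
  have hVo : IsOpen {u : Fin (m + 1) → ℝ | (∀ j, 0 < u j) ∧ T u 0 m < Δ} := by
    rw [Set.setOf_and]
    refine IsOpen.inter ?_ (isOpen_lt (T_cont 0 m) continuous_const)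
    have : {u : Fin (m + 1) → ℝ | ∀ j, 0 < u j} = ⋂ j, {u | 0 < u j} := by
      ext u; simp
    rw [this]
    exact isOpen_iInter_of_finite fun j => isOpen_lt continuous_const (continuous_apply j)
  have hVmem : {u : Fin (m + 1) → ℝ | (∀ j, 0 < u j) ∧ T u 0 m < Δ} ∈ 𝓝 t :=
    hVo.mem_nhds ⟨ht1, ht2⟩
  have hQ : ContinuousAt (fun u : Fin (m + 1) → ℝ =>
      ∫ s in T u 0 i..T u 0 (i + 1),
        g lam A B s *
          ∏ k : Fin (m + 1), if (k : ℕ) ≤ i then F lam τ (u k) (s - T u 0 (k : ℕ)) else 1) t := by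
    have hH : Continuous fun u : Fin (m + 1) → ℝ =>
        (∫ s in (0 : ℝ)..T u 0 (i + 1), Phi lam A B i u s) - ∫ s in (0 : ℝ)..T u 0 i, Phi lam A B i u s := by
      refine Continuous.sub ?_ ?_ <;>
        exact intervalIntegral.continuous_parametric_intervalIntegral_of_continuous hΦc (T_cont _ _)
    refine ContinuousAt.congr hH.continuousAt ?_
    filter_upwards [hVmem] with u hu
    exact (hrw u hu.1 hu.2).symm
  unfold Ilow
  exact hP.mul hQ
end

section
/- Let m ≥ 1 be an integer and let t₀, …, t_{m−1} be reals with t_j > 0 for all j and Σ_{j=0}^{m−1} t_j < Δ; set d = Δ − Σ_{j=0}^{m−1} t_j > 0. Then the one-sided limits of t_m ↦ I_m(t₀, …, t_{m−1}, t_m) at t_m = d exist, and (limit from below) − (limit from above) = a · λ²·d·exp(−λ·d) · ∏_{k=0}^{m−1} λ²·t_k·exp(−λ·t_k), which is strictly positive. -/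
open Real Set Filter MeasureTheory

lemma measurable_F (lam τ t : ℝ) : Measurable (fun s => F lam τ t s) := by
  unfold F
  refine Measurable.ite ?_ measurable_const (Measurable.ite ?_ ?_ measurable_const)
  · rcases lt_or_ge 0 t with h | h
    · have : {s : ℝ | 0 < t ∧ t < s} = Ioi t := by ext s; simp [h, mem_Ioi]
      rw [this]; exact measurableSet_Ioi
    · have : {s : ℝ | 0 < t ∧ t < s} = ∅ := by
        ext s; simp only [mem_setOf_eq, mem_empty_iff_false, iff_false]
        intro h'; linarith [h'.1]
      rw [this]; exact MeasurableSet.empty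
  · have : {s : ℝ | s ≤ t ∧ t ≤ s + τ} = Iic t ∩ Ici (t - τ) := by
      ext s
      simp only [mem_setOf_eq, mem_inter_iff, mem_Iic, mem_Ici, sub_le_iff_le_add]
    rw [this]; exact measurableSet_Iic.inter measurableSet_Ici
  · fun_prop

lemma F_nonneg (lam τ t s : ℝ) (hlam : 0 < lam) (hs0 : 0 ≤ s) : 0 ≤ F lam τ t s := by
  unfold F
  split_ifs with h1 h2
  · have := h1.1; positivity
  · have hb : 0 ≤ 1 + lam * s := by nlinarith
    have hts : 0 ≤ t - s := by linarith [h2.1]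
    have := Real.exp_pos (-lam * s)
    have := Real.exp_pos (-lam * (t - s))
    positivity
  · exact le_rfl

lemma F_le (lam Δ τ t s : ℝ) (hlam : 0 < lam) (hΔ : 0 < Δ) (hΔτ : Δ < τ)
    (hs0 : 0 ≤ s) (hsΔ : s ≤ Δ) :
    F lam τ t s ≤ (1 + lam * Δ) * lam ^ 2 * (Δ + τ) := by
  unfold F
  split_ifs with h1 h2
  · have ht0 := h1.1
    have htΔ : t ≤ Δ + τ := by linarith [h1.2]
    have he : Real.exp (-lam * t) ≤ 1 := by
      apply Real.exp_le_one_iff.mpr; nlinarith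
    calc lam ^ 2 * t * Real.exp (-lam * t) ≤ lam ^ 2 * t * 1 :=
          mul_le_mul_of_nonneg_left he (by positivity)
      _ = lam ^ 2 * t := mul_one _
      _ ≤ lam ^ 2 * (Δ + τ) := by nlinarith [sq_nonneg lam]
      _ ≤ (1 + lam * Δ) * (lam ^ 2 * (Δ + τ)) := by
          apply le_mul_of_one_le_left (by nlinarith [sq_nonneg lam]); nlinarith
      _ = (1 + lam * Δ) * lam ^ 2 * (Δ + τ) := by ring
  · have hts : 0 ≤ t - s := by linarith [h2.1]
    have htsτ : t - s ≤ τ := by linarith [h2.2]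
    have hb : 0 ≤ 1 + lam * s := by nlinarith
    have he1 : Real.exp (-lam * s) ≤ 1 := by
      apply Real.exp_le_one_iff.mpr; nlinarith
    have he2 : Real.exp (-lam * (t - s)) ≤ 1 := by
      apply Real.exp_le_one_iff.mpr; nlinarith
    have A1 : (1 + lam * s) * Real.exp (-lam * s) ≤ 1 + lam * Δ := by
      calc (1 + lam * s) * Real.exp (-lam * s) ≤ (1 + lam * s) * 1 :=
            mul_le_mul_of_nonneg_left he1 hb
        _ = 1 + lam * s := mul_one _
        _ ≤ 1 + lam * Δ := by nlinarith
    have A2 : lam ^ 2 * (t - s) * Real.exp (-lam * (t - s)) ≤ lam ^ 2 * (Δ + τ) := by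
      calc lam ^ 2 * (t - s) * Real.exp (-lam * (t - s)) ≤ lam ^ 2 * (t - s) * 1 :=
            mul_le_mul_of_nonneg_left he2 (by positivity)
        _ = lam ^ 2 * (t - s) := mul_one _
        _ ≤ lam ^ 2 * (Δ + τ) := by nlinarith [sq_nonneg lam]
    have A2nn : 0 ≤ lam ^ 2 * (t - s) * Real.exp (-lam * (t - s)) :=
      mul_nonneg (mul_nonneg (by positivity) hts) (Real.exp_pos _).le
    calc (1 + lam * s) * Real.exp (-lam * s) * (lam ^ 2 * (t - s) * Real.exp (-lam * (t - s)))
        ≤ (1 + lam * Δ) * (lam ^ 2 * (Δ + τ)) := mul_le_mul A1 A2 A2nn (by nlinarith)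
      _ = (1 + lam * Δ) * lam ^ 2 * (Δ + τ) := by ring
  · exact mul_nonneg (mul_nonneg (by nlinarith) (sq_nonneg lam)) (by linarith)

lemma T_nonneg_s10 {m : ℕ} (t : Fin m → ℝ) (ht : ∀ j, 0 < t j) (k : ℕ) : 0 ≤ T t 0 k := by
  unfold T
  apply Finset.sum_nonneg
  intro j _
  split_ifs
  · exact (ht j).le
  · exact le_rfl

lemma T_mono {m : ℕ} (t : Fin m → ℝ) (ht : ∀ j, 0 < t j) {k q : ℕ} (h : k ≤ q) :
    T t 0 k ≤ T t 0 q := by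
  unfold T
  apply Finset.sum_le_sum
  intro j _
  split_ifs with h1 h2
  · exact le_rfl
  · exact absurd ⟨h1.1, lt_of_lt_of_le h1.2 h⟩ h2
  · exact (ht j).le
  · exact le_rfl

lemma T_succ {m : ℕ} (t : Fin m → ℝ) (k : ℕ) (hk : k < m) :
    T t 0 (k + 1) = T t 0 k + t ⟨k, hk⟩ := by
  have key : T t 0 (k + 1) - T t 0 k = t ⟨k, hk⟩ := by
    unfold T
    rw [← Finset.sum_sub_distrib]
    have : ∀ j : Fin m,
        ((if 0 ≤ (j : ℕ) ∧ (j : ℕ) < k + 1 then t j else 0)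
          - (if 0 ≤ (j : ℕ) ∧ (j : ℕ) < k then t j else 0))
        = (if j = ⟨k, hk⟩ then t j else 0) := by
      intro j
      rcases j with ⟨jv, hjv⟩
      simp only [Fin.ext_iff, Fin.val_mk]
      split_ifs <;> first | ring1 | (exfalso; omega)
    rw [Finset.sum_congr rfl fun j _ => this j]
    simp
  linarith

lemma T_snoc {m : ℕ} (t : Fin m → ℝ) (x : ℝ) {k : ℕ} (hk : k ≤ m) :
    T (Fin.snoc t x) 0 k = T t 0 k := by
  unfold T
  rw [Fin.sum_univ_castSucc]
  have h : ¬ ((m : ℕ) < k) := by omega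
  simp [Fin.snoc_castSucc, h]

lemma prod_snoc_F (lam τ : ℝ) {m : ℕ} (t : Fin m → ℝ) (x c : ℝ) :
    (∏ k : Fin (m + 1), F lam τ ((Fin.snoc t x : Fin (m + 1) → ℝ) k)
      (c - T (Fin.snoc t x : Fin (m + 1) → ℝ) 0 (k : ℕ)))
      = (∏ k : Fin m, F lam τ (t k) (c - T t 0 (k : ℕ))) * F lam τ x (c - T t 0 m) := by
  rw [Fin.prod_univ_castSucc]
  congr 1
  · refine Finset.prod_congr rfl fun k _ => ?_
    rw [Fin.snoc_castSucc, Fin.coe_castSucc, T_snoc t x k.2.le]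
  · rw [Fin.snoc_last, Fin.val_last, T_snoc t x le_rfl]

/-- jump of `t_m ↦ I_m(t₀,…,t_{m−1},t_m)` across `t_m = d = Δ − Σ_{j=0}^{m−1} t_j`,
equal to `a λ² d e^{−λd} ∏_{k<m} λ² t_k e^{−λ t_k} > 0`. -/
theorem stmt10 (lam Δ τ A B : ℝ) (hlam : 0 < lam) (hΔ : 0 < Δ) (hΔτ : Δ < τ)
    (m : ℕ) (hm : 1 ≤ m) (t : Fin m → ℝ)
    (hpos : ∀ j, 0 < t j) (hsum : T t 0 m < Δ) :
    0 < Δ - T t 0 m ∧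
    ∃ L₁ L₂ : ℝ,
      Filter.Tendsto (fun x => Itop lam Δ τ A B (Fin.snoc t x))
        (nhdsWithin (Δ - T t 0 m) (Set.Iio (Δ - T t 0 m))) (nhds L₁) ∧
      Filter.Tendsto (fun x => Itop lam Δ τ A B (Fin.snoc t x))
        (nhdsWithin (Δ - T t 0 m) (Set.Ioi (Δ - T t 0 m))) (nhds L₂) ∧
      L₁ - L₂ =
        aC lam Δ * (lam ^ 2 * (Δ - T t 0 m) * Real.exp (-lam * (Δ - T t 0 m))) *
          ∏ k : Fin m, lam ^ 2 * t k * Real.exp (-lam * t k) ∧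
      0 < L₁ - L₂ := by
  have hS0 : 0 ≤ T t 0 m := T_nonneg_s10 t hpos m
  have hd : 0 < Δ - T t 0 m := by linarith
  refine ⟨hd, ?_⟩
  -- rewrite Itop along the snoc
  have hItop : ∀ x, Itop lam Δ τ A B (Fin.snoc t x) =
      (∫ s in (T t 0 m)..Δ, g lam A B s *
        ((∏ k : Fin m, F lam τ (t k) (s - T t 0 (k : ℕ))) * F lam τ x (s - T t 0 m)))
      + aC lam Δ * ((∏ k : Fin m, F lam τ (t k) (Δ - T t 0 (k : ℕ))) * F lam τ x (Δ - T t 0 m)) := by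
    intro x
    unfold Itop
    rw [T_snoc t x le_rfl]
    congr 1
    · exact intervalIntegral.integral_congr fun s _ => by rw [prod_snoc_F]
    · rw [prod_snoc_F]
  -- continuity of the integral term in the parameter
  have hcontI : ContinuousAt (fun x => ∫ s in (T t 0 m)..Δ, g lam A B s *
      ((∏ k : Fin m, F lam τ (t k) (s - T t 0 (k : ℕ))) * F lam τ x (s - T t 0 m)))
      (Δ - T t 0 m) := by
    apply intervalIntegral.continuousAt_of_dominated_interval
      (bound := fun _ => (|A| + |B| * Real.exp (2 * lam * Δ)) *
        (((1 + lam * Δ) * lam ^ 2 * (Δ + τ)) ^ m * ((1 + lam * Δ) * lam ^ 2 * (Δ + τ))))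
    · apply Eventually.of_forall
      intro x
      apply Measurable.aestronglyMeasurable
      apply Measurable.mul
      · unfold g; fun_prop
      · exact (Finset.measurable_prod Finset.univ fun k _ =>
          (measurable_F lam τ (t k)).comp (measurable_id.sub measurable_const)).mul
          ((measurable_F lam τ x).comp (measurable_id.sub measurable_const))
    · apply Eventually.of_forall
      intro x
      apply Eventually.of_forall
      intro s hs
      rw [uIoc_of_le hsum.le] at hs
      have hsS : T t 0 m < s := hs.1
      have hsΔ' : s ≤ Δ := hs.2
      have habsg : |g lam A B s| ≤ |A| + |B| * Real.exp (2 * lam * Δ) := by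
        unfold g
        calc |A + B * Real.exp (2 * lam * s)| ≤ |A| + |B * Real.exp (2 * lam * s)| := abs_add_le _ _
          _ = |A| + |B| * Real.exp (2 * lam * s) := by
              rw [abs_mul, abs_of_pos (Real.exp_pos _)]
          _ ≤ |A| + |B| * Real.exp (2 * lam * Δ) := by
              have h1 : Real.exp (2 * lam * s) ≤ Real.exp (2 * lam * Δ) :=
                Real.exp_le_exp.mpr (by nlinarith)
              nlinarith [abs_nonneg B]
      have hPk : ∀ k : Fin m, 0 ≤ s - T t 0 (k : ℕ) ∧ s - T t 0 (k : ℕ) ≤ Δ := by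
        intro k
        have h1 : T t 0 (k : ℕ) ≤ T t 0 m := T_mono t hpos k.2.le
        have h2 : 0 ≤ T t 0 (k : ℕ) := T_nonneg_s10 t hpos k
        exact ⟨by linarith, by linarith⟩
      have hP0 : 0 ≤ ∏ k : Fin m, F lam τ (t k) (s - T t 0 (k : ℕ)) :=
        Finset.prod_nonneg fun k _ => F_nonneg lam τ (t k) _ hlam (hPk k).1
      have hCnn : (0:ℝ) ≤ (1 + lam * Δ) * lam ^ 2 * (Δ + τ) :=
        mul_nonneg (mul_nonneg (by nlinarith) (sq_nonneg lam)) (by linarith)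
      have hPle : (∏ k : Fin m, F lam τ (t k) (s - T t 0 (k : ℕ)))
          ≤ ((1 + lam * Δ) * lam ^ 2 * (Δ + τ)) ^ m := by
        calc (∏ k : Fin m, F lam τ (t k) (s - T t 0 (k : ℕ)))
            ≤ ∏ _k : Fin m, ((1 + lam * Δ) * lam ^ 2 * (Δ + τ)) :=
              Finset.prod_le_prod (fun k _ => F_nonneg lam τ (t k) _ hlam (hPk k).1)
                (fun k _ => F_le lam Δ τ (t k) _ hlam hΔ hΔτ (hPk k).1 (hPk k).2)
          _ = ((1 + lam * Δ) * lam ^ 2 * (Δ + τ)) ^ m := by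
              rw [Finset.prod_const, Finset.card_univ, Fintype.card_fin]
      have hFx0 : 0 ≤ F lam τ x (s - T t 0 m) := F_nonneg lam τ x _ hlam (by linarith)
      have hFxle : F lam τ x (s - T t 0 m) ≤ (1 + lam * Δ) * lam ^ 2 * (Δ + τ) :=
        F_le lam Δ τ x _ hlam hΔ hΔτ (by linarith) (by linarith)
      rw [Real.norm_eq_abs, abs_mul]
      calc |g lam A B s| * |(∏ k : Fin m, F lam τ (t k) (s - T t 0 (k : ℕ))) *
              F lam τ x (s - T t 0 m)|
          = |g lam A B s| * ((∏ k : Fin m, F lam τ (t k) (s - T t 0 (k : ℕ))) *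
              F lam τ x (s - T t 0 m)) := by rw [abs_of_nonneg (mul_nonneg hP0 hFx0)]
        _ ≤ (|A| + |B| * Real.exp (2 * lam * Δ)) *
              (((1 + lam * Δ) * lam ^ 2 * (Δ + τ)) ^ m * ((1 + lam * Δ) * lam ^ 2 * (Δ + τ))) := by
            apply mul_le_mul habsg
              (mul_le_mul hPle hFxle hFx0 (pow_nonneg hCnn m))
              (mul_nonneg hP0 hFx0) ?_
            positivity
    · exact intervalIntegrable_const
    · have hae : ∀ᵐ s : ℝ, s ≠ Δ := by
        have h0 : (volume : Measure ℝ) {Δ} = 0 := measure_singleton Δ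
        rw [ae_iff]
        convert h0 using 2
        ext s
        simp
      filter_upwards [hae] with s hsne hs
      rw [uIoc_of_le hsum.le] at hs
      have hsS : T t 0 m < s := hs.1
      have hsΔlt : s < Δ := lt_of_le_of_ne hs.2 hsne
      have h1 : s - T t 0 m < Δ - T t 0 m := by linarith
      have h2 : Δ - T t 0 m < (s - T t 0 m) + τ := by linarith
      have hFcont : ContinuousAt (fun x => F lam τ x (s - T t 0 m)) (Δ - T t 0 m) := by
        have hψ : ContinuousAt (fun x => (1 + lam * (s - T t 0 m)) *
            Real.exp (-lam * (s - T t 0 m)) *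
            (lam ^ 2 * (x - (s - T t 0 m)) * Real.exp (-lam * (x - (s - T t 0 m)))))
            (Δ - T t 0 m) := by fun_prop
        apply hψ.congr
        filter_upwards [Ioo_mem_nhds h1 h2] with x hx
        unfold F
        rw [if_neg, if_pos ⟨hx.1.le, hx.2.le⟩]
        push_neg
        exact fun _ => hx.1.le
      exact continuousAt_const.mul (continuousAt_const.mul hFcont)
  -- one-sided limits of the atomic term factor
  have htelL : Tendsto (fun x => F lam τ x (Δ - T t 0 m))
      (nhdsWithin (Δ - T t 0 m) (Set.Iio (Δ - T t 0 m)))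
      (nhds (lam ^ 2 * (Δ - T t 0 m) * Real.exp (-lam * (Δ - T t 0 m)))) := by
    have hev : ∀ᶠ x in nhdsWithin (Δ - T t 0 m) (Set.Iio (Δ - T t 0 m)),
        F lam τ x (Δ - T t 0 m) = lam ^ 2 * x * Real.exp (-lam * x) := by
      filter_upwards [Ioo_mem_nhdsLT_of_mem
        (show (Δ - T t 0 m) ∈ Ioc (0:ℝ) (Δ - T t 0 m) from ⟨hd, le_rfl⟩)] with x hx
      unfold F
      rw [if_pos ⟨hx.1, hx.2⟩]
    have hbase : Tendsto (fun x => lam ^ 2 * x * Real.exp (-lam * x))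
        (nhdsWithin (Δ - T t 0 m) (Set.Iio (Δ - T t 0 m)))
        (nhds (lam ^ 2 * (Δ - T t 0 m) * Real.exp (-lam * (Δ - T t 0 m)))) :=
      ((Continuous.tendsto (by fun_prop) _).mono_left nhdsWithin_le_nhds)
    exact Filter.Tendsto.congr' (Filter.EventuallyEq.symm hev) hbase
  have htelR : Tendsto (fun x => F lam τ x (Δ - T t 0 m))
      (nhdsWithin (Δ - T t 0 m) (Set.Ioi (Δ - T t 0 m))) (nhds 0) := by
    have hev : ∀ᶠ x in nhdsWithin (Δ - T t 0 m) (Set.Ioi (Δ - T t 0 m)),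
        F lam τ x (Δ - T t 0 m) = (1 + lam * (Δ - T t 0 m)) *
          Real.exp (-lam * (Δ - T t 0 m)) *
          (lam ^ 2 * (x - (Δ - T t 0 m)) * Real.exp (-lam * (x - (Δ - T t 0 m)))) := by
      filter_upwards [Ioo_mem_nhdsGT_of_mem
        (show (Δ - T t 0 m) ∈ Ico (Δ - T t 0 m) (Δ - T t 0 m + τ) from ⟨le_rfl, by linarith⟩)]
        with x hx
      unfold F
      rw [if_neg, if_pos ⟨hx.1.le, hx.2.le⟩]
      push_neg
      exact fun _ => hx.1.le
    have hbase : Tendsto (fun x => (1 + lam * (Δ - T t 0 m)) *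
        Real.exp (-lam * (Δ - T t 0 m)) *
        (lam ^ 2 * (x - (Δ - T t 0 m)) * Real.exp (-lam * (x - (Δ - T t 0 m)))))
        (nhdsWithin (Δ - T t 0 m) (Set.Ioi (Δ - T t 0 m))) (nhds 0) := by
      have := ((Continuous.tendsto (show Continuous (fun x => (1 + lam * (Δ - T t 0 m)) *
        Real.exp (-lam * (Δ - T t 0 m)) *
        (lam ^ 2 * (x - (Δ - T t 0 m)) * Real.exp (-lam * (x - (Δ - T t 0 m))))) by fun_prop)
        (Δ - T t 0 m)).mono_left (nhdsWithin_le_nhds :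
          nhdsWithin (Δ - T t 0 m) (Set.Ioi (Δ - T t 0 m)) ≤ _))
      simpa using this
    exact Filter.Tendsto.congr' (Filter.EventuallyEq.symm hev) hbase
  -- value of the product at s = Δ
  have hPval : (∏ k : Fin m, F lam τ (t k) (Δ - T t 0 (k : ℕ)))
      = ∏ k : Fin m, lam ^ 2 * t k * Real.exp (-lam * t k) := by
    refine Finset.prod_congr rfl fun k _ => ?_
    have hk1 : T t 0 ((k : ℕ) + 1) = T t 0 (k : ℕ) + t k := by
      have := T_succ t (k : ℕ) k.2
      simpa using this
    have hlt : t k < Δ - T t 0 (k : ℕ) := by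
      have h2 : T t 0 ((k : ℕ) + 1) ≤ T t 0 m := T_mono t hpos k.2
      linarith
    unfold F
    rw [if_pos ⟨hpos k, hlt⟩]
  -- assemble
  refine ⟨(∫ s in (T t 0 m)..Δ, g lam A B s *
        ((∏ k : Fin m, F lam τ (t k) (s - T t 0 (k : ℕ))) *
          F lam τ (Δ - T t 0 m) (s - T t 0 m)))
      + aC lam Δ * ((∏ k : Fin m, F lam τ (t k) (Δ - T t 0 (k : ℕ))) *
          (lam ^ 2 * (Δ - T t 0 m) * Real.exp (-lam * (Δ - T t 0 m)))),
    (∫ s in (T t 0 m)..Δ, g lam A B s *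
        ((∏ k : Fin m, F lam τ (t k) (s - T t 0 (k : ℕ))) *
          F lam τ (Δ - T t 0 m) (s - T t 0 m)))
      + aC lam Δ * ((∏ k : Fin m, F lam τ (t k) (Δ - T t 0 (k : ℕ))) * 0), ?_, ?_, ?_, ?_⟩
  · apply Tendsto.congr (fun x => (hItop x).symm)
    exact ((hcontI.tendsto).mono_left nhdsWithin_le_nhds).add
      (tendsto_const_nhds.mul (tendsto_const_nhds.mul htelL))
  · apply Tendsto.congr (fun x => (hItop x).symm)
    exact ((hcontI.tendsto).mono_left nhdsWithin_le_nhds).add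
      (tendsto_const_nhds.mul (tendsto_const_nhds.mul htelR))
  · rw [hPval]; ring
  · have heq : ((∫ s in (T t 0 m)..Δ, g lam A B s *
        ((∏ k : Fin m, F lam τ (t k) (s - T t 0 (k : ℕ))) *
          F lam τ (Δ - T t 0 m) (s - T t 0 m)))
      + aC lam Δ * ((∏ k : Fin m, F lam τ (t k) (Δ - T t 0 (k : ℕ))) *
          (lam ^ 2 * (Δ - T t 0 m) * Real.exp (-lam * (Δ - T t 0 m)))))
      - ((∫ s in (T t 0 m)..Δ, g lam A B s *
        ((∏ k : Fin m, F lam τ (t k) (s - T t 0 (k : ℕ))) *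
          F lam τ (Δ - T t 0 m) (s - T t 0 m)))
      + aC lam Δ * ((∏ k : Fin m, F lam τ (t k) (Δ - T t 0 (k : ℕ))) * 0))
      = aC lam Δ * (lam ^ 2 * (Δ - T t 0 m) * Real.exp (-lam * (Δ - T t 0 m))) *
          ∏ k : Fin m, lam ^ 2 * t k * Real.exp (-lam * t k) := by
      rw [hPval]; ring
    rw [heq]
    have haC : 0 < aC lam Δ := by
      unfold aC
      apply div_pos (by positivity)
      nlinarith [Real.exp_pos (2 * lam * Δ), mul_pos hlam hΔ]
    have hc : 0 < lam ^ 2 * (Δ - T t 0 m) * Real.exp (-lam * (Δ - T t 0 m)) := by positivity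
    have hprodpos : 0 < ∏ k : Fin m, lam ^ 2 * t k * Real.exp (-lam * t k) :=
      Finset.prod_pos fun k _ => by have := hpos k; positivity
    exact mul_pos (mul_pos haC hc) hprodpos
end
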